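/- Let (Ω, P) be a probability space, n ∈ ℕ, and let S_1, …, S_{n+1} : Ω → ℝ be exchangeable random variables that are almost surely pairwise distinct, i.e. P({ω : S_i(ω) = S_j(ω) for some i ≠ j}) = 0. Then for every integer k with 1 ≤ k ≤ n+1, P({ω : #{i : S_i(ω) < S_{n+1}(ω)} ≤ k − 1}) = k/(n+1). -/

import Mathlib

open MeasureTheory
open scoped ENNReal

namespace Stmt1Aux

variable {n : ℕ}

/-- rank of coordinate `m` in the vector `x`. -/
noncomputable def rk (m : Fin (n + 1)) (x : Fin (n + 1) → ℝ) : ℕ :=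
  (Finset.univ.filter (fun i => x i < x m)).card

lemma rk_eq_sum (m : Fin (n + 1)) (x : Fin (n + 1) → ℝ) :
    rk m x = ∑ i : Fin (n + 1), if x i < x m then 1 else 0 := by
  rw [rk, Finset.card_filter]

lemma measurable_rk (m : Fin (n + 1)) : Measurable (rk (n := n) m) := by
  have h : (rk (n := n) m) = fun x => ∑ i : Fin (n + 1), if x i < x m then 1 else 0 := by
    funext x; exact rk_eq_sum m x
  rw [h]
  exact Finset.measurable_sum _ fun i _ =>
    Measurable.ite (measurableSet_lt (measurable_pi_apply i) (measurable_pi_apply m))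
      measurable_const measurable_const

lemma rk_comp (σ : Equiv.Perm (Fin (n + 1))) (m : Fin (n + 1)) (x : Fin (n + 1) → ℝ) :
    rk m (fun i => x (σ i)) = rk (σ m) x := by
  rw [rk_eq_sum, rk_eq_sum]
  exact Fintype.sum_equiv σ _ _ (fun i => rfl)

lemma rk_le (m : Fin (n + 1)) (x : Fin (n + 1) → ℝ) : rk m x ≤ n := by
  have hsub : Finset.univ.filter (fun i => x i < x m) ⊆ Finset.univ.erase m := by
    intro i hi
    simp only [Finset.mem_filter] at hi
    exact Finset.mem_erase.2 ⟨fun h => absurd (h ▸ hi.2) (lt_irrefl _), Finset.mem_univ i⟩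
  calc rk m x ≤ (Finset.univ.erase m).card := Finset.card_le_card hsub
    _ = n := by simp

lemma rk_lt_rk (x : Fin (n + 1) → ℝ) {m m' : Fin (n + 1)} (h : x m < x m') :
    rk m x < rk m' x := by
  apply Finset.card_lt_card
  rw [Finset.ssubset_def]
  constructor
  · intro i hi
    simp only [Finset.mem_filter, Finset.mem_univ, true_and] at hi ⊢
    exact hi.trans h
  · intro hsub
    have hm := hsub (Finset.mem_filter.2 ⟨Finset.mem_univ m, h⟩)
    simp only [Finset.mem_filter] at hm
    exact lt_irrefl _ hm.2

lemma rk_injective {x : Fin (n + 1) → ℝ} (hx : Function.Injective x) :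
    Function.Injective (fun m => rk m x) := by
  intro m m' h
  by_contra hne
  rcases lt_or_gt_of_ne (fun he => hne (hx he)) with hlt | hlt
  · exact absurd h (Nat.ne_of_lt (rk_lt_rk x hlt))
  · exact absurd h.symm (Nat.ne_of_lt (rk_lt_rk x hlt))

lemma exists_rk_eq {x : Fin (n + 1) → ℝ} (hx : Function.Injective x) {j : ℕ} (hj : j ≤ n) :
    ∃ m, rk m x = j := by
  have hR : Function.Injective
      (fun m : Fin (n + 1) => (⟨rk m x, Nat.lt_succ_of_le (rk_le m x)⟩ : Fin (n + 1))) := by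
    intro m m' h
    exact rk_injective hx (congrArg Fin.val h)
  have hsurj := Finite.injective_iff_surjective.mp hR
  obtain ⟨m, hm⟩ := hsurj ⟨j, Nat.lt_succ_of_le hj⟩
  exact ⟨m, congrArg Fin.val hm⟩

end Stmt1Aux

open Stmt1Aux

/-- Exchangeable, a.s. distinct real random variables: exact quantile rank probability. -/
theorem stmt_1 {Ω : Type*} [MeasurableSpace Ω] (P : Measure Ω) [IsProbabilityMeasure P]
    (n : ℕ) (S : Fin (n + 1) → Ω → ℝ) (hmeas : ∀ i, Measurable (S i))
    (hexch : ∀ σ : Equiv.Perm (Fin (n + 1)),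
      Measure.map (fun ω => fun i => S (σ i) ω) P = Measure.map (fun ω => fun i => S i ω) P)
    (hdistinct : P {ω | ∃ i j : Fin (n + 1), i ≠ j ∧ S i ω = S j ω} = 0)
    (k : ℕ) (hk1 : 1 ≤ k) (hk2 : k ≤ n + 1) :
    P {ω | (Finset.univ.filter (fun i : Fin (n + 1) => S i ω < S (Fin.last n) ω)).card ≤ k - 1}
      = (k : ℝ≥0∞) / (n + 1) := by
  classical
  set f : Ω → (Fin (n + 1) → ℝ) := fun ω i => S i ω with hfdef
  have hfm : Measurable f := measurable_pi_lambda _ hmeas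
  set ν : Measure (Fin (n + 1) → ℝ) := Measure.map f P with hν
  -- invariance of the rank events under ν
  have key : ∀ (m : Fin (n + 1)) (j : ℕ),
      ν {x | rk m x = j} = ν {x | rk (Fin.last n) x = j} := by
    intro m j
    set σ := Equiv.swap m (Fin.last n) with hσ
    have hg : Measurable (fun x : Fin (n + 1) → ℝ => fun i => x (σ i)) :=
      measurable_pi_lambda _ fun i => measurable_pi_apply (σ i)
    have hmap : Measure.map (fun x : Fin (n + 1) → ℝ => fun i => x (σ i)) ν = ν := by
      rw [hν, Measure.map_map hg hfm]
      exact hexch σ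
    have hB : MeasurableSet {x : Fin (n + 1) → ℝ | rk m x = j} :=
      measurable_rk m (measurableSet_singleton j)
    calc ν {x | rk m x = j}
        = Measure.map (fun x : Fin (n + 1) → ℝ => fun i => x (σ i)) ν {x | rk m x = j} := by
          rw [hmap]
      _ = ν ((fun x : Fin (n + 1) → ℝ => fun i => x (σ i)) ⁻¹' {x | rk m x = j}) :=
          Measure.map_apply hg hB
      _ = ν {x | rk (Fin.last n) x = j} := by
          congr 1
          ext x
          simp only [Set.mem_preimage, Set.mem_setOf_eq, rk_comp, hσ, Equiv.swap_apply_left]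
  have hPA : ∀ (m : Fin (n + 1)) (j : ℕ),
      P {ω | rk m (f ω) = j} = ν {x | rk m x = j} := by
    intro m j
    have hB : MeasurableSet {x : Fin (n + 1) → ℝ | rk m x = j} :=
      measurable_rk m (measurableSet_singleton j)
    rw [hν, Measure.map_apply hfm hB]
    rfl
  set T : Set Ω := {ω | ∃ i j : Fin (n + 1), i ≠ j ∧ S i ω = S j ω} with hT
  have hTmeas : MeasurableSet T := by
    have hTe : T = ⋃ (i : Fin (n + 1)) (j : Fin (n + 1)) (_ : i ≠ j), {ω | S i ω = S j ω} := by
      ext ω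
      simp [hT]
    rw [hTe]
    exact MeasurableSet.iUnion fun i => MeasurableSet.iUnion fun j =>
      MeasurableSet.iUnion fun _ => measurableSet_eq_fun (hmeas i) (hmeas j)
  have hG : ∀ ω, ω ∉ T → Function.Injective (f ω) := by
    intro ω hω i j hij
    by_contra hne
    exact hω ⟨i, j, hne, hij⟩
  have hEj : ∀ j : ℕ, j ≤ n →
      P {ω | rk (Fin.last n) (f ω) = j} = ((n : ℝ≥0∞) + 1)⁻¹ := by
    intro j hj
    set A : Fin (n + 1) → Set Ω := fun m => {ω | rk m (f ω) = j} with hA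
    have hAmeas : ∀ m, MeasurableSet (A m) := fun m =>
      ((measurable_rk m).comp hfm) (measurableSet_singleton j)
    have hdisj : Pairwise (Function.onFun Disjoint (fun m => A m ∩ Tᶜ)) := by
      intro m m' hmm'
      simp only [Function.onFun, Set.disjoint_left]
      rintro ω ⟨hm, hωG⟩ ⟨hm', _⟩
      exact hmm' (rk_injective (hG ω hωG) (hm.trans hm'.symm))
    have hcover : (⋃ m, A m ∩ Tᶜ) = Tᶜ := by
      apply Set.Subset.antisymm
      · exact Set.iUnion_subset fun m => Set.inter_subset_right
      · intro ω hω
        obtain ⟨m, hm⟩ := exists_rk_eq (hG ω hω) hj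
        exact Set.mem_iUnion.2 ⟨m, hm, hω⟩
    have hTc : P Tᶜ = 1 := by
      rw [measure_compl hTmeas (measure_ne_top P T), hdistinct]
      simp
    have hsum : ∑ m : Fin (n + 1), P (A m ∩ Tᶜ) = 1 := by
      rw [← tsum_fintype (L := SummationFilter.unconditional _), ← measure_iUnion hdisj (fun m => (hAmeas m).inter hTmeas.compl),
        hcover, hTc]
    have hAG : ∀ m, P (A m ∩ Tᶜ) = P (A m) := by
      intro m
      refine le_antisymm (measure_mono Set.inter_subset_left) ?_
      have hsub : A m ⊆ (A m ∩ Tᶜ) ∪ T := by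
        intro ω hω
        by_cases hωT : ω ∈ T
        · exact Or.inr hωT
        · exact Or.inl ⟨hω, hωT⟩
      calc P (A m) ≤ P ((A m ∩ Tᶜ) ∪ T) := measure_mono hsub
        _ ≤ P (A m ∩ Tᶜ) + P T := measure_union_le _ _
        _ = P (A m ∩ Tᶜ) := by rw [hdistinct, add_zero]
    have hallEq : ∀ m, P (A m) = P (A (Fin.last n)) := by
      intro m
      simp only [hA]
      rw [hPA m j, hPA (Fin.last n) j, key m j]
    have hmain : ((n : ℝ≥0∞) + 1) * P (A (Fin.last n)) = 1 := by
      calc ((n : ℝ≥0∞) + 1) * P (A (Fin.last n))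
          = ∑ _m : Fin (n + 1), P (A (Fin.last n)) := by
            rw [Finset.sum_const, Finset.card_univ, Fintype.card_fin, nsmul_eq_mul]
            push_cast
            ring
        _ = ∑ m : Fin (n + 1), P (A m ∩ Tᶜ) := by
            refine Finset.sum_congr rfl fun m _ => ?_
            rw [hAG m, hallEq m]
        _ = 1 := hsum
    have hne : ((n : ℝ≥0∞) + 1) ≠ 0 := by simp
    have hnt : ((n : ℝ≥0∞) + 1) ≠ ⊤ := by
      exact ENNReal.add_ne_top.2 ⟨ENNReal.natCast_ne_top n, ENNReal.one_ne_top⟩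
    have h2 := congrArg (fun z => ((n : ℝ≥0∞) + 1)⁻¹ * z) hmain
    simp only [mul_one] at h2
    rw [← mul_assoc, ENNReal.inv_mul_cancel hne hnt, one_mul] at h2
    exact h2
  have htarget :
      {ω | (Finset.univ.filter (fun i : Fin (n + 1) => S i ω < S (Fin.last n) ω)).card ≤ k - 1}
        = ⋃ j ∈ Finset.range k, {ω | rk (Fin.last n) (f ω) = j} := by
    ext ω
    simp only [Set.mem_setOf_eq, Set.mem_iUnion, Finset.mem_range]
    constructor
    · intro h
      have hc : rk (Fin.last n) (f ω) ≤ k - 1 := h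
      exact ⟨rk (Fin.last n) (f ω), by omega, rfl⟩
    · rintro ⟨j, hjk, hj⟩
      have hc : rk (Fin.last n) (f ω) = j := hj
      show rk (Fin.last n) (f ω) ≤ k - 1
      omega
  rw [htarget, measure_biUnion_finset ?_ ?_]
  · have hsum : ∀ j ∈ Finset.range k,
        P {ω | rk (Fin.last n) (f ω) = j} = ((n : ℝ≥0∞) + 1)⁻¹ := by
      intro j hj
      rw [Finset.mem_range] at hj
      exact hEj j (by omega)
    rw [Finset.sum_congr rfl hsum, Finset.sum_const, Finset.card_range, nsmul_eq_mul,
      div_eq_mul_inv]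
  · intro j hj j' hj' hjj'
    simp only [Function.onFun, Set.disjoint_left]
    intro ω hω hω'
    have h1 : rk (Fin.last n) (f ω) = j := hω
    have h2 : rk (Fin.last n) (f ω) = j' := hω'
    exact hjj' (h1.symm.trans h2)
  · intro j _
    exact ((measurable_rk (Fin.last n)).comp hfm) (measurableSet_singleton j)
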